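/- Every edge of the enhanced hypercube Q_{n,k} (1 ≤ k ≤ n, n ≥ 3) lies on a cycle of every even length l with 4 ≤ l ≤ 2^n. -/

import Mathlib

open SimpleGraph

/-- The `n`-dimensional hypercube: vertices are binary strings of length `n`
(indexed so that bit `i+1` of the paper is index `i`), adjacent iff they
differ in exactly one bit. -/
def hypercube (n : ℕ) : SimpleGraph (Fin n → Bool) where
  Adj u v := ∃! i, u i ≠ v i
  symm := by
    constructor
    rintro u v ⟨i, hi, hu⟩
    exact ⟨i, hi.symm, fun j hj => hu j hj.symm⟩
  loopless := by
    constructor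
    rintro u ⟨i, hi, -⟩
    exact hi rfl

/-- Skip relation: `u` and `v` differ exactly in the last `k` bits
(indices `0, …, k-1`). -/
def skipRel (n k : ℕ) (u v : Fin n → Bool) : Prop :=
  u ≠ v ∧ ∀ i : Fin n, (i.val < k → u i ≠ v i) ∧ (k ≤ i.val → u i = v i)

/-- The enhanced hypercube `Q_{n,k}`: hypercube edges together with skip edges. -/
def enhanced (n k : ℕ) : SimpleGraph (Fin n → Bool) where
  Adj u v := (hypercube n).Adj u v ∨ skipRel n k u v
  symm := by
    constructor
    rintro u v (h | ⟨hne, h⟩)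
    · exact Or.inl ((hypercube n).symm.symm _ _ h)
    · exact Or.inr ⟨hne.symm, fun i =>
        ⟨fun hi => ((h i).1 hi).symm, fun hi => ((h i).2 hi).symm⟩⟩
  loopless := by
    constructor
    rintro u (h | ⟨hne, -⟩)
    · exact (hypercube n).loopless.irrefl u h
    · exact hne rfl

/-- The folded hypercube `FQ_n`: hypercube edges together with complementary edges. -/
def folded (n : ℕ) : SimpleGraph (Fin n → Bool) where
  Adj u v := (hypercube n).Adj u v ∨ (u ≠ v ∧ ∀ i, u i ≠ v i)
  symm := by
    constructor
    rintro u v (h | ⟨hne, h⟩)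
    · exact Or.inl ((hypercube n).symm.symm _ _ h)
    · exact Or.inr ⟨hne.symm, fun i => (h i).symm⟩
  loopless := by
    constructor
    rintro u (h | ⟨hne, -⟩)
    · exact (hypercube n).loopless.irrefl u h
    · exact hne rfl

/-- The Cartesian product `K₂ × G`: two copies of `G` joined by crossing edges. -/
def K2Prod {V : Type*} (G : SimpleGraph V) : SimpleGraph (Bool × V) :=
  (completeGraph Bool) □ G

/-- The edge `e` lies on a cycle of length `l` in `G`. -/
def EdgeOnCycle {V : Type*} (G : SimpleGraph V) (e : Sym2 V) (l : ℕ) : Prop :=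
  ∃ (v : V) (c : G.Walk v v), c.IsCycle ∧ c.length = l ∧ e ∈ c.edges

section InfraAux

variable {V : Type*} {W : Type*}

def CycSeq (G : SimpleGraph V) (l : ℕ) (f : ℕ → V) : Prop :=
  f l = f 0 ∧ (∀ i j, i < l → j < l → f i = f j → i = j) ∧ ∀ i, i < l → G.Adj (f i) (f (i + 1))

def CycOn (G : SimpleGraph V) (x y : V) (l : ℕ) : Prop :=
  ∃ f : ℕ → V, f 0 = x ∧ f 1 = y ∧ CycSeq G l f

def Hcyc (G : SimpleGraph V) (N : ℕ) : Prop :=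
  ∀ x y, G.Adj x y → ∀ l, l % 2 = 0 → 4 ≤ l → l ≤ N → CycOn G x y l

def Hdeg (G : SimpleGraph V) : Prop := ∀ v, ∃ w, G.Adj v w

def PathSeq (G : SimpleGraph V) (l : ℕ) (f : ℕ → V) : Prop :=
  (∀ i j, i ≤ l → j ≤ l → f i = f j → i = j) ∧ ∀ i, i < l → G.Adj (f i) (f (i + 1))

lemma cycOn_mono {G H : SimpleGraph V} (hGH : ∀ a b, G.Adj a b → H.Adj a b)
    {x y : V} {l : ℕ} (h : CycOn G x y l) : CycOn H x y l := by
  obtain ⟨f, h0, h1, hc, hi, ha⟩ := h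
  exact ⟨f, h0, h1, hc, hi, fun i hil => hGH _ _ (ha i hil)⟩

lemma hcyc_equiv {G : SimpleGraph V} {H : SimpleGraph W} (e : V ≃ W)
    (he : ∀ u v, G.Adj u v ↔ H.Adj (e u) (e v)) {N : ℕ} (h : Hcyc H N) : Hcyc G N := by
  intro x y hxy l hl2 hl4 hlN
  obtain ⟨f, h0, h1, hc, hi, ha⟩ := h (e x) (e y) ((he x y).1 hxy) l hl2 hl4 hlN
  refine ⟨fun i => e.symm (f i), by simp [h0], by simp [h1], by simp [hc], ?_, ?_⟩
  · intro i j hil hjl hij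
    exact hi i j hil hjl (e.symm.injective hij)
  · intro i hil
    rw [he]
    simpa using ha i hil

lemma hdeg_equiv {G : SimpleGraph V} {H : SimpleGraph W} (e : V ≃ W)
    (he : ∀ u v, G.Adj u v ↔ H.Adj (e u) (e v)) (h : Hdeg H) : Hdeg G := by
  intro v
  obtain ⟨w, hw⟩ := h (e v)
  exact ⟨e.symm w, (he _ _).2 (by simpa using hw)⟩

/-- Walk built from a sequence. -/
def seqWalk (G : SimpleGraph V) (f : ℕ → V) :
    ∀ l : ℕ, (∀ i, i < l → G.Adj (f i) (f (i + 1))) → G.Walk (f 0) (f l)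
  | 0, _ => Walk.nil
  | (l + 1), h =>
    (seqWalk G f l fun i hi => h i (Nat.lt_succ_of_lt hi)).concat (h l l.lt_succ_self)

lemma seqWalk_length (G : SimpleGraph V) (f : ℕ → V) (l : ℕ)
    (h : ∀ i, i < l → G.Adj (f i) (f (i + 1))) : (seqWalk G f l h).length = l := by
  induction l with
  | zero => rfl
  | succ l ih => simp [seqWalk, Walk.length_concat, ih]

lemma seqWalk_edges (G : SimpleGraph V) (f : ℕ → V) (l : ℕ)
    (h : ∀ i, i < l → G.Adj (f i) (f (i + 1))) :
    (seqWalk G f l h).edges = (List.range l).map (fun i => s(f i, f (i + 1))) := by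
  induction l with
  | zero => rfl
  | succ l ih => simp [seqWalk, Walk.edges_concat, ih, List.range_succ]

lemma seqWalk_support (G : SimpleGraph V) (f : ℕ → V) (l : ℕ)
    (h : ∀ i, i < l → G.Adj (f i) (f (i + 1))) :
    (seqWalk G f l h).support = (List.range (l + 1)).map f := by
  induction l with
  | zero => rfl
  | succ l ih => simp [seqWalk, Walk.support_concat, ih, List.range_succ]

lemma edgeOnCycle_of_cycOn {G : SimpleGraph V} {x y : V} {l : ℕ} (h3 : 3 ≤ l)
    (h : CycOn G x y l) : EdgeOnCycle G s(x, y) l := by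
  obtain ⟨f, h0, h1, hcl, hinj, hadj⟩ := h
  have hinj' : ∀ a b, a ≤ l → b ≤ l → f a = f b → (a = b ∨ (a = 0 ∧ b = l) ∨ (a = l ∧ b = 0)) := by
    intro a b ha hb hab
    rcases Nat.lt_or_ge a l with ha' | ha'
    · rcases Nat.lt_or_ge b l with hb' | hb'
      · exact Or.inl (hinj a b ha' hb' hab)
      · have hbl : b = l := by omega
        subst hbl
        rw [hcl] at hab
        have := hinj a 0 ha' (by omega) hab
        omega
    · have hal : a = l := by omega
      rw [hal, hcl] at hab
      rcases Nat.lt_or_ge b l with hb' | hb'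
      · have := hinj 0 b (by omega) hb' hab
        omega
      · omega
  refine ⟨x, (seqWalk G f l hadj).copy h0 (hcl.trans h0), ?_, ?_, ?_⟩
  · rw [Walk.isCycle_def]
    refine ⟨?_, ?_, ?_⟩
    · rw [Walk.isTrail_def, Walk.edges_copy, seqWalk_edges]
      refine List.Nodup.map_on ?_ List.nodup_range
      intro i hi j hj hij
      rw [List.mem_range] at hi hj
      rw [Sym2.eq_iff] at hij
      rcases hij with ⟨e1, _⟩ | ⟨e1, e2⟩
      · exact hinj i j hi hj e1
      · have c1 := hinj' i (j + 1) (by omega) (by omega) e1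
        have c2 := hinj' (i + 1) j (by omega) (by omega) e2
        omega
    · intro hnil
      have := congrArg Walk.length hnil
      rw [Walk.length_copy, seqWalk_length] at this
      simp at this
      omega
    · rw [Walk.support_copy, seqWalk_support, List.range_succ_eq_map]
      rw [List.map_cons, List.tail_cons, List.map_map]
      refine List.Nodup.map_on ?_ List.nodup_range
      intro i hi j hj hij
      rw [List.mem_range] at hi hj
      have := hinj' (i + 1) (j + 1) (by omega) (by omega) hij
      omega
  · rw [Walk.length_copy, seqWalk_length]
  · rw [Walk.edges_copy, seqWalk_edges]
    rw [← h0, ← h1]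
    exact List.mem_map.2 ⟨0, List.mem_range.2 (by omega), rfl⟩

end InfraAux
section PathAux

variable {V : Type*}

lemma pathOne {G : SimpleGraph V} {x y : V} (hxy : G.Adj x y) :
    PathSeq G 1 (fun i => if i = 0 then x else y) := by
  constructor
  · intro i j hi hj hij
    by_cases hi0 : i = 0 <;> by_cases hj0 : j = 0 <;> simp [hi0, hj0] at hij ⊢
    · exact absurd hij hxy.ne
    · exact absurd hij.symm hxy.ne
    · omega
  · intro i hi
    have hi0 : i = 0 := by omega
    subst hi0
    simpa using hxy

lemma pathThru {G : SimpleGraph V} {N : ℕ} (hcyc : Hcyc G N) (hNe : N % 2 = 0)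
    {x y : V} (hxy : G.Adj x y) {m : ℕ} (hm1 : 1 ≤ m) (hmN : m ≤ N - 1) :
    ∃ f : ℕ → V, f 0 = x ∧ f 1 = y ∧ PathSeq G m f := by
  rcases eq_or_lt_of_le hm1 with h1 | h2
  · exact ⟨fun i => if i = 0 then x else y, by simp, by simp, h1 ▸ pathOne hxy⟩
  · have hN2 : 2 ≤ N := by omega
    rcases Nat.even_or_odd m with he | ho
    · rw [Nat.even_iff] at he
      obtain ⟨f, h0, h1', hcl, hinj, hadj⟩ :=
        hcyc x y hxy (m + 2) (by omega) (by omega) (by omega)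
      exact ⟨f, h0, h1', ⟨fun i j hi hj => hinj i j (by omega) (by omega),
        fun i hi => hadj i (by omega)⟩⟩
    · rw [Nat.odd_iff] at ho
      obtain ⟨f, h0, h1', hcl, hinj, hadj⟩ :=
        hcyc x y hxy (m + 1) (by omega) (by omega) (by omega)
      exact ⟨f, h0, h1', ⟨fun i j hi hj => hinj i j (by omega) (by omega),
        fun i hi => hadj i (by omega)⟩⟩

lemma pathBtw {G : SimpleGraph V} {N : ℕ} (hcyc : Hcyc G N) (hNe : N % 2 = 0)
    {s t : V} (hst : G.Adj s t) {m : ℕ} (hm : m % 2 = 1) (hmN : m ≤ N - 1) :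
    ∃ f : ℕ → V, f 0 = s ∧ f m = t ∧ PathSeq G m f := by
  rcases eq_or_lt_of_le (show 1 ≤ m by omega) with h1 | h2
  · refine ⟨fun i => if i = 0 then s else t, by simp, ?_, h1 ▸ pathOne hst⟩
    rw [← h1]
    simp
  · obtain ⟨f, h0, h1', hcl, hinj, hadj⟩ :=
      hcyc t s hst.symm (m + 1) (by omega) (by omega) (by omega)
    refine ⟨fun i => f (i + 1), h1', ?_, ?_, ?_⟩
    · show f (m + 1) = t
      rw [hcl, h0]
    · intro i j hi hj hij
      have hij' : f (i + 1) = f (j + 1) := hij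
      rcases Nat.lt_or_ge (i + 1) (m + 1) with hi' | hi'
      · rcases Nat.lt_or_ge (j + 1) (m + 1) with hj' | hj'
        · have := hinj (i + 1) (j + 1) hi' hj' hij'
          omega
        · have hj'' : j + 1 = m + 1 := by omega
          rw [hj'', hcl] at hij'
          have := hinj (i + 1) 0 hi' (by omega) hij'
          omega
      · have hi'' : i + 1 = m + 1 := by omega
        rw [hi'', hcl] at hij'
        rcases Nat.lt_or_ge (j + 1) (m + 1) with hj' | hj'
        · have := hinj 0 (j + 1) (by omega) hj' hij'
          omega
        · omega
    · intro i hi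
      exact hadj (i + 1) (by omega)

end PathAux
section ProdAux

variable {V : Type*}

lemma k2Prod_adj {G : SimpleGraph V} {a b : Bool} {x y : V} :
    (K2Prod G).Adj (a, x) (b, y) ↔ (a ≠ b ∧ x = y) ∨ (G.Adj x y ∧ a = b) := by
  simp only [K2Prod, SimpleGraph.boxProd_adj, completeGraph_eq_top, top_adj]

lemma prod_hdeg {G : SimpleGraph V} : Hdeg (K2Prod G) := by
  rintro ⟨a, x⟩
  exact ⟨(!a, x), k2Prod_adj.2 (Or.inl ⟨by simp, rfl⟩)⟩

lemma prod_hcyc {G : SimpleGraph V} {N : ℕ} (hdeg : Hdeg G) (hcyc : Hcyc G N)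
    (hN2 : 2 ≤ N) (hNe : N % 2 = 0) : Hcyc (K2Prod G) (2 * N) := by
  rintro ⟨a, x⟩ ⟨b, y⟩ hadj l hl2 hl4 hlN
  obtain ⟨m, rfl, hm1, hmN⟩ : ∃ m, l = 2 * m + 2 ∧ 1 ≤ m ∧ m ≤ N - 1 :=
    ⟨l / 2 - 1, by omega, by omega, by omega⟩
  rw [k2Prod_adj] at hadj
  have hcross : ∀ (c d : Bool) (z : V), c ≠ d → (K2Prod G).Adj (c, z) (d, z) :=
    fun c d z h => k2Prod_adj.2 (Or.inl ⟨h, rfl⟩)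
  have hlayer : ∀ (c : Bool) (z w : V), G.Adj z w → (K2Prod G).Adj (c, z) (c, w) :=
    fun c z w h => k2Prod_adj.2 (Or.inr ⟨h, rfl⟩)
  rcases hadj with ⟨hab, rfl⟩ | ⟨hxy, rfl⟩
  · -- cross edge (a, x) -- (b, x)
    obtain ⟨w, hw⟩ := hdeg x
    obtain ⟨f, hf0, hf1, hfinj, hfadj⟩ := pathThru hcyc hNe hw hm1 hmN
    refine ⟨fun i => (if i = 0 then a else if i ≤ m + 1 then b else a,
        f (if i = 0 then 0 else if i ≤ m + 1 then i - 1 else 2 * m + 2 - i)),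
      by simp [hf0], ?_, ?_, ?_, ?_⟩
    · simp only [if_neg (show (1 : ℕ) ≠ 0 by omega), if_pos (show (1 : ℕ) ≤ m + 1 by omega)]
      simp [hf0]
    · -- closure
      simp only [if_neg (show 2 * m + 2 ≠ 0 by omega),
        if_neg (show ¬ 2 * m + 2 ≤ m + 1 by omega)]
      simp
    · -- injectivity
      intro i j hi hj hij
      simp only [Prod.mk.injEq] at hij
      obtain ⟨h1, h2⟩ := hij
      split_ifs at h1 h2 <;>
        first
          | omega
          | exact absurd h1 hab
          | exact absurd h1.symm hab
          | (have := hfinj _ _ (by omega) (by omega) h2; omega)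
    · -- adjacency
      intro i hi
      rcases Nat.eq_or_lt_of_le (Nat.zero_le i) with h0 | h0
      · simp only [← h0, if_pos rfl, if_neg (show (1:ℕ) ≠ 0 by omega),
          if_pos (show (1:ℕ) ≤ m + 1 by omega)]
        exact hcross a b (f 0) hab
      · rcases Nat.lt_or_ge i (m + 1) with hmid | hmid
        · simp only [if_neg (show i ≠ 0 by omega), if_pos (show i ≤ m + 1 by omega),
            if_neg (show i + 1 ≠ 0 by omega), if_pos (show i + 1 ≤ m + 1 by omega)]
          have : i - 1 + 1 = i := by omega
          exact hlayer b _ _ (this ▸ hfadj (i - 1) (by omega))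
        · rcases Nat.eq_or_lt_of_le hmid with heq | hgt
          · simp only [if_neg (show i ≠ 0 by omega), if_pos (show i ≤ m + 1 by omega),
              if_neg (show i + 1 ≠ 0 by omega), if_neg (show ¬ i + 1 ≤ m + 1 by omega)]
            have e1 : i - 1 = 2 * m + 2 - (i + 1) := by omega
            rw [e1]
            exact hcross b a _ (Ne.symm hab)
          · simp only [if_neg (show i ≠ 0 by omega), if_neg (show ¬ i ≤ m + 1 by omega),
              if_neg (show i + 1 ≠ 0 by omega), if_neg (show ¬ i + 1 ≤ m + 1 by omega)]
            have e1 : 2 * m + 2 - i = 2 * m + 2 - (i + 1) + 1 := by omega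
            rw [e1]
            exact hlayer a _ _ ((hfadj (2 * m + 2 - (i + 1)) (by omega)).symm)
  · -- in-layer edge (a, x) -- (a, y)
    obtain ⟨f, hf0, hf1, hfinj, hfadj⟩ := pathThru hcyc hNe hxy hm1 hmN
    refine ⟨fun i => (if i ≤ m then a else if i ≤ 2 * m + 1 then !a else a,
        f (if i ≤ m then i else if i ≤ 2 * m + 1 then 2 * m + 1 - i else 0)),
      by simp [hf0], ?_, ?_, ?_, ?_⟩
    · simp only [if_pos (show (1 : ℕ) ≤ m by omega)]
      simp [hf1]
    · simp only [if_neg (show ¬ 2 * m + 2 ≤ m by omega),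
        if_neg (show ¬ 2 * m + 2 ≤ 2 * m + 1 by omega), if_pos (show (0:ℕ) ≤ m by omega)]
    · intro i j hi hj hij
      simp only [Prod.mk.injEq] at hij
      obtain ⟨h1, h2⟩ := hij
      have hne : a ≠ !a := by simp
      split_ifs at h1 h2 <;>
        first
          | omega
          | exact absurd h1 hne
          | exact absurd h1.symm hne
          | (have := hfinj _ _ (by omega) (by omega) h2; omega)
    · intro i hi
      rcases Nat.lt_or_ge i m with hlo | hlo
      · simp only [if_pos (show i ≤ m by omega), if_pos (show i + 1 ≤ m by omega)]
        exact hlayer a _ _ (hfadj i (by omega))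
      · rcases Nat.eq_or_lt_of_le hlo with heq | hgt
        · simp only [if_pos (show i ≤ m by omega), if_neg (show ¬ i + 1 ≤ m by omega),
            if_pos (show i + 1 ≤ 2 * m + 1 by omega)]
          have e1 : 2 * m + 1 - (i + 1) = i := by omega
          rw [e1]
          exact hcross a (!a) _ (by simp)
        · rcases Nat.lt_or_ge i (2 * m + 1) with hhi | hhi
          · simp only [if_neg (show ¬ i ≤ m by omega), if_pos (show i ≤ 2 * m + 1 by omega),
              if_neg (show ¬ i + 1 ≤ m by omega), if_pos (show i + 1 ≤ 2 * m + 1 by omega)]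
            have e1 : 2 * m + 1 - i = 2 * m + 1 - (i + 1) + 1 := by omega
            rw [e1]
            exact hlayer (!a) _ _ ((hfadj (2 * m + 1 - (i + 1)) (by omega)).symm)
          · have hieq : i = 2 * m + 1 := by omega
            subst hieq
            simp only [if_neg (show ¬ 2 * m + 1 ≤ m by omega),
              if_pos (le_refl (2 * m + 1)),
              if_neg (show ¬ 2 * m + 1 + 1 ≤ m by omega),
              if_neg (show ¬ 2 * m + 1 + 1 ≤ 2 * m + 1 by omega)]
            simpa using hcross (!a) a (f 0) (by simp)
    
end ProdAux
section CubeAux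

lemma hypercube_adj {n : ℕ} {u v : Fin n → Bool} :
    (hypercube n).Adj u v ↔ ∃ i, (u i ≠ v i) ∧ ∀ j, u j ≠ v j → j = i := Iff.rfl

lemma flip_adj {n : ℕ} (u : Fin n → Bool) (i : Fin n) :
    (hypercube n).Adj u (Function.update u i (!u i)) := by
  rw [hypercube_adj]
  refine ⟨i, by simp, ?_⟩
  intro j hj
  by_contra hne
  rw [Function.update_of_ne hne] at hj
  exact hj rfl

lemma hyper_hdeg {n : ℕ} (hn : 1 ≤ n) : Hdeg (hypercube n) := by
  intro v
  exact ⟨_, flip_adj v ⟨0, by omega⟩⟩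

lemma hyper_compl {n : ℕ} {p q : Fin n → Bool} (h : (hypercube n).Adj p q) :
    (hypercube n).Adj (fun i => !p i) (fun i => !q i) := by
  rw [hypercube_adj] at h ⊢
  obtain ⟨i, hi, hu⟩ := h
  refine ⟨i, by simpa using hi, fun j hj => hu j (by simpa using hj)⟩

def splitEquiv (m : ℕ) : (Fin (m + 1) → Bool) ≃ Bool × (Fin m → Bool) where
  toFun u := (u (Fin.last m), fun i => u i.castSucc)
  invFun p := Fin.snoc p.2 p.1
  left_inv u := by
    funext i
    refine Fin.lastCases ?_ ?_ i <;> simp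
  right_inv p := by
    refine Prod.ext ?_ ?_ <;> simp

lemma hyper_split {m : ℕ} (u v : Fin (m + 1) → Bool) :
    (hypercube (m + 1)).Adj u v ↔
      (u (Fin.last m) ≠ v (Fin.last m) ∧ ∀ i : Fin m, u i.castSucc = v i.castSucc) ∨
      (u (Fin.last m) = v (Fin.last m) ∧
        (hypercube m).Adj (fun i => u i.castSucc) (fun i => v i.castSucc)) := by
  rw [hypercube_adj]
  constructor
  · rintro ⟨i, hi, hu⟩
    rcases Fin.eq_castSucc_or_eq_last i with ⟨j, rfl⟩ | rfl
    · refine Or.inr ⟨?_, ?_⟩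
      · by_contra h
        exact absurd (hu (Fin.last m) h) (Fin.castSucc_lt_last j).ne'
      · rw [hypercube_adj]
        exact ⟨j, hi, fun j' hj' => Fin.castSucc_injective m (hu j'.castSucc hj')⟩
    · refine Or.inl ⟨hi, fun j => ?_⟩
      by_contra h
      exact absurd (hu j.castSucc h) (ne_of_lt (Fin.castSucc_lt_last j))
  · rintro (⟨hne, hcs⟩ | ⟨heq, hadj⟩)
    · refine ⟨Fin.last m, hne, fun j hj => ?_⟩
      rcases Fin.eq_castSucc_or_eq_last j with ⟨j', rfl⟩ | rfl
      · exact absurd (hcs j') hj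
      · rfl
    · rw [hypercube_adj] at hadj
      obtain ⟨j, hj, hun⟩ := hadj
      refine ⟨j.castSucc, hj, fun j' hj' => ?_⟩
      rcases Fin.eq_castSucc_or_eq_last j' with ⟨j'', rfl⟩ | rfl
      · exact congrArg Fin.castSucc (hun j'' hj')
      · exact absurd heq hj'

lemma skip_ne {n k : ℕ} (hk1 : 1 ≤ k) (hkn : k ≤ n) {u v : Fin n → Bool}
    (h : ∀ i : Fin n, (i.val < k → u i ≠ v i) ∧ (k ≤ i.val → u i = v i)) : u ≠ v := by
  intro huv
  exact (h ⟨0, by omega⟩).1 hk1 (by rw [huv])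

lemma skip_split {m k : ℕ} (hk1 : 1 ≤ k) (hk : k ≤ m) (u v : Fin (m + 1) → Bool) :
    skipRel (m + 1) k u v ↔
      (u (Fin.last m) = v (Fin.last m) ∧
        skipRel m k (fun i => u i.castSucc) (fun i => v i.castSucc)) := by
  constructor
  · rintro ⟨hne, hbits⟩
    have hlast : u (Fin.last m) = v (Fin.last m) :=
      (hbits (Fin.last m)).2 (by simp [Fin.val_last]; omega)
    refine ⟨hlast, skip_ne hk1 hk ?_, ?_⟩ <;>
    · intro i
      exact ⟨fun h => (hbits i.castSucc).1 (by simpa using h),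
        fun h => (hbits i.castSucc).2 (by simpa using h)⟩
  · rintro ⟨hlast, hne, hbits⟩
    have hb : ∀ i : Fin (m + 1), (i.val < k → u i ≠ v i) ∧ (k ≤ i.val → u i = v i) := by
      intro i
      rcases Fin.eq_castSucc_or_eq_last i with ⟨j, rfl⟩ | rfl
      · exact ⟨fun h => (hbits j).1 (by simpa using h), fun h => (hbits j).2 (by simpa using h)⟩
      · exact ⟨fun h => absurd h (by simp [Fin.val_last]; omega), fun _ => hlast⟩
    exact ⟨skip_ne hk1 (by omega) hb, hb⟩

lemma enhanced_split {m k : ℕ} (hk1 : 1 ≤ k) (hk : k ≤ m) (u v : Fin (m + 1) → Bool) :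
    (enhanced (m + 1) k).Adj u v ↔
      (K2Prod (enhanced m k)).Adj (splitEquiv m u) (splitEquiv m v) := by
  show _ ↔ (K2Prod (enhanced m k)).Adj (_, _) (_, _)
  rw [k2Prod_adj]
  show (hypercube (m+1)).Adj u v ∨ skipRel (m+1) k u v ↔ _
  rw [hyper_split, skip_split hk1 hk]
  constructor
  · rintro ((⟨h1, h2⟩ | ⟨h1, h2⟩) | ⟨h1, h2⟩)
    · exact Or.inl ⟨h1, funext h2⟩
    · exact Or.inr ⟨Or.inl h2, h1⟩
    · exact Or.inr ⟨Or.inr h2, h1⟩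
  · rintro (⟨h1, h2⟩ | ⟨(h2 | h2), h1⟩)
    · exact Or.inl (Or.inl ⟨h1, fun i => congrFun h2 i⟩)
    · exact Or.inl (Or.inr ⟨h1, h2⟩)
    · exact Or.inr ⟨h1, h2⟩

lemma hyper_split_equiv {m : ℕ} (u v : Fin (m + 1) → Bool) :
    (hypercube (m + 1)).Adj u v ↔
      (K2Prod (hypercube m)).Adj (splitEquiv m u) (splitEquiv m v) := by
  show _ ↔ (K2Prod (hypercube m)).Adj (_, _) (_, _)
  rw [k2Prod_adj, hyper_split]
  constructor
  · rintro (⟨h1, h2⟩ | ⟨h1, h2⟩)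
    · exact Or.inl ⟨h1, funext h2⟩
    · exact Or.inr ⟨h2, h1⟩
  · rintro (⟨h1, h2⟩ | ⟨h2, h1⟩)
    · exact Or.inl ⟨h1, fun i => congrFun h2 i⟩
    · exact Or.inr ⟨h1, h2⟩

lemma hyper_hcyc : ∀ m : ℕ, 1 ≤ m → Hcyc (hypercube m) (2 ^ m) := by
  intro m
  induction m with
  | zero => omega
  | succ m ih =>
    intro _
    rcases Nat.eq_or_lt_of_le (show 1 ≤ m + 1 by omega) with h1 | h2
    · intro x y _ l hl2 hl4 hlN
      rw [← h1] at hlN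
      norm_num at hlN
      omega
    · have hm1 : 1 ≤ m := by omega
      have hN2 : 2 ≤ 2 ^ m := by
        calc 2 = 2 ^ 1 := by norm_num
        _ ≤ 2 ^ m := Nat.pow_le_pow_right (by norm_num) hm1
      have hNe : 2 ^ m % 2 = 0 := by
        obtain ⟨m', rfl⟩ : ∃ m', m = m' + 1 := ⟨m - 1, by omega⟩
        rw [pow_succ]
        omega
      have := prod_hcyc (hyper_hdeg hm1) (ih hm1) hN2 hNe
      have h2N : 2 * 2 ^ m = 2 ^ (m + 1) := by ring
      rw [h2N] at this
      exact hcyc_equiv (splitEquiv m) (hyper_split_equiv) this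

end CubeAux
section FoldedAux

lemma snoc_hyper_same {m : ℕ} {p q : Fin m → Bool} (a : Bool) (h : (hypercube m).Adj p q) :
    (hypercube (m + 1)).Adj (Fin.snoc p a) (Fin.snoc q a) := by
  rw [hyper_split]
  refine Or.inr ⟨by simp, ?_⟩
  have e1 : (fun i : Fin m => (Fin.snoc p a : Fin (m+1) → Bool) i.castSucc) = p := by
    funext i
    simp
  have e2 : (fun i : Fin m => (Fin.snoc q a : Fin (m+1) → Bool) i.castSucc) = q := by
    funext i
    simp
  rw [e1, e2]
  exact h

lemma folded_compl_adj {n : ℕ} (hn : 1 ≤ n) {u v : Fin n → Bool} (h : ∀ i, u i ≠ v i) :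
    (folded n).Adj u v :=
  Or.inr ⟨fun he => (h ⟨0, hn⟩) (by rw [he]), h⟩

lemma bool_ne_elim {s t : Bool} (h : s ≠ t) : t = !s := by
  cases s <;> cases t <;> simp_all

lemma folded_hcyc : ∀ n : ℕ, 1 ≤ n → Hcyc (folded n) (2 ^ n) := by
  intro n hn x y hadj l hl2 hl4 hlN
  rcases hadj with hhyp | ⟨hne, hdiff⟩
  · exact cycOn_mono (fun a b h => Or.inl h) (hyper_hcyc n hn x y hhyp l hl2 hl4 hlN)
  · obtain ⟨m, rfl⟩ : ∃ m, n = m + 1 := ⟨n - 1, by omega⟩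
    by_cases hm0 : m = 0
    · subst hm0
      norm_num at hlN
      omega
    have hm1 : 1 ≤ m := by omega
    have hP2 : 2 ≤ 2 ^ m := by
      calc 2 = 2 ^ 1 := by norm_num
      _ ≤ 2 ^ m := Nat.pow_le_pow_right (by norm_num) hm1
    have hPe : 2 ^ m % 2 = 0 := by
      obtain ⟨m', rfl⟩ : ∃ m', m = m' + 1 := ⟨m - 1, by omega⟩
      rw [pow_succ]
      omega
    have hlP : l ≤ 2 * 2 ^ m := by
      rw [pow_succ] at hlN
      omega
    set a' := min (l - 3) (2 ^ m - 1) with ha'def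
    set b' := l - 2 - a' with hb'def
    have ha'1 : 1 ≤ a' := by omega
    have ha'P : a' ≤ 2 ^ m - 1 := by omega
    have ha'o : a' % 2 = 1 := by omega
    have hb'1 : 1 ≤ b' := by omega
    have hb'P : b' ≤ 2 ^ m - 1 := by omega
    have hb'o : b' % 2 = 1 := by omega
    have hl : l = a' + b' + 2 := by omega
    have haxy : x (Fin.last m) ≠ y (Fin.last m) := hdiff _
    obtain ⟨z, hz⟩ := hyper_hdeg hm1 (Fin.init y)
    obtain ⟨f2, hf20, hf2b, hf2inj, hf2adj⟩ := pathBtw (hyper_hcyc m hm1) hPe hz hb'o hb'P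
    have hxz : (hypercube m).Adj (Fin.init x) (fun i => !z i) := by
      have h1 := hyper_compl hz
      have e1 : (fun i => !(Fin.init y) i) = Fin.init x := by
        funext i
        rw [show Fin.init y i = !(Fin.init x i) from bool_ne_elim (hdiff i.castSucc)]
        simp
      rwa [e1] at h1
    obtain ⟨f1, hf10, hf1a, hf1inj, hf1adj⟩ :=
      pathBtw (hyper_hcyc m hm1) hPe hxz.symm ha'o ha'P
    refine ⟨fun i => if i = 0 then x else if i ≤ b' + 1 then Fin.snoc (f2 (i - 1)) (y (Fin.last m))
        else Fin.snoc (f1 (i - (b' + 2))) (x (Fin.last m)), by simp, ?_, ?_, ?_, ?_⟩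
    · -- h 1 = y
      simp only [if_neg (show (1:ℕ) ≠ 0 by omega), if_pos (show (1:ℕ) ≤ b' + 1 by omega)]
      rw [show (1:ℕ) - 1 = 0 from rfl, hf20, Fin.snoc_init_self]
    · -- closure
      simp only [if_neg (show l ≠ 0 by omega), if_neg (show ¬ l ≤ b' + 1 by omega)]
      rw [show l - (b' + 2) = a' by omega, hf1a, Fin.snoc_init_self]
      simp
    · -- injectivity
      intro i j hi hj hij
      by_cases ci0 : i = 0 <;> by_cases cj0 : j = 0
      · omega
      · subst ci0
        by_cases cjm : j ≤ b' + 1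
        · simp only [if_pos rfl, if_neg cj0, if_pos cjm] at hij
          have := congrFun hij (Fin.last m)
          rw [Fin.snoc_last] at this
          exact absurd this haxy
        · simp only [if_pos rfl, if_neg cj0, if_neg cjm] at hij
          have hfe : f1 (j - (b' + 2)) = f1 a' := by
            rw [hf1a]
            funext t
            have := congrFun hij t.castSucc
            rw [Fin.snoc_castSucc] at this
            exact this.symm
          have := hf1inj _ _ (by omega) (by omega) hfe
          omega
      · subst cj0
        by_cases cim : i ≤ b' + 1
        · simp only [if_pos rfl, if_neg ci0, if_pos cim] at hij
          have := congrFun hij (Fin.last m)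
          rw [Fin.snoc_last] at this
          exact absurd this.symm haxy
        · simp only [if_pos rfl, if_neg ci0, if_neg cim] at hij
          have hfe : f1 (i - (b' + 2)) = f1 a' := by
            rw [hf1a]
            funext t
            have := congrFun hij t.castSucc
            rw [Fin.snoc_castSucc] at this
            exact this
          have := hf1inj _ _ (by omega) (by omega) hfe
          omega
      · by_cases cim : i ≤ b' + 1 <;> by_cases cjm : j ≤ b' + 1
        · simp only [if_neg ci0, if_pos cim, if_neg cj0, if_pos cjm] at hij
          have hfe : f2 (i - 1) = f2 (j - 1) := by
            funext t
            have := congrFun hij t.castSucc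
            rwa [Fin.snoc_castSucc, Fin.snoc_castSucc] at this
          have := hf2inj _ _ (by omega) (by omega) hfe
          omega
        · simp only [if_neg ci0, if_pos cim, if_neg cj0, if_neg cjm] at hij
          have := congrFun hij (Fin.last m)
          rw [Fin.snoc_last, Fin.snoc_last] at this
          exact absurd this.symm haxy
        · simp only [if_neg ci0, if_neg cim, if_neg cj0, if_pos cjm] at hij
          have := congrFun hij (Fin.last m)
          rw [Fin.snoc_last, Fin.snoc_last] at this
          exact absurd this haxy
        · simp only [if_neg ci0, if_neg cim, if_neg cj0, if_neg cjm] at hij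
          have hfe : f1 (i - (b' + 2)) = f1 (j - (b' + 2)) := by
            funext t
            have := congrFun hij t.castSucc
            rwa [Fin.snoc_castSucc, Fin.snoc_castSucc] at this
          have := hf1inj _ _ (by omega) (by omega) hfe
          omega
    · -- adjacency
      intro i hi
      by_cases ci0 : i = 0
      · subst ci0
        simp only [if_pos rfl, if_neg (show (1:ℕ) ≠ 0 by omega),
          if_pos (show (1:ℕ) ≤ b' + 1 by omega)]
        refine folded_compl_adj (by omega) ?_
        intro jj
        refine Fin.lastCases ?_ (fun t => ?_) jj
        · rw [show (1:ℕ) - 1 = 0 from rfl, Fin.snoc_last]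
          rw [hf20]
          exact haxy
        · rw [show (1:ℕ) - 1 = 0 from rfl, Fin.snoc_castSucc, hf20]
          exact hdiff t.castSucc
      · rcases Nat.lt_or_ge i (b' + 1) with cim | cim
        · simp only [if_neg ci0, if_pos (show i ≤ b' + 1 by omega),
            if_neg (show i + 1 ≠ 0 by omega), if_pos (show i + 1 ≤ b' + 1 by omega)]
          rw [show i + 1 - 1 = i - 1 + 1 by omega]
          exact Or.inl (snoc_hyper_same _ (hf2adj (i - 1) (by omega)))
        · rcases Nat.eq_or_lt_of_le cim with ceq | cgt
          · obtain rfl : i = b' + 1 := by omega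
            simp only [if_neg ci0, if_pos (le_refl (b' + 1)),
              if_neg (show b' + 1 + 1 ≠ 0 by omega), if_neg (show ¬ b' + 1 + 1 ≤ b' + 1 by omega)]
            rw [show b' + 1 - 1 = b' from rfl, show b' + 1 + 1 - (b' + 2) = 0 by omega,
              hf2b, hf10]
            refine folded_compl_adj (by omega) ?_
            intro jj
            refine Fin.lastCases ?_ (fun t => ?_) jj
            · rw [Fin.snoc_last, Fin.snoc_last]
              exact haxy.symm
            · rw [Fin.snoc_castSucc, Fin.snoc_castSucc]
              simp
          · simp only [if_neg ci0, if_neg (show ¬ i ≤ b' + 1 by omega),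
              if_neg (show i + 1 ≠ 0 by omega), if_neg (show ¬ i + 1 ≤ b' + 1 by omega)]
            rw [show i + 1 - (b' + 2) = i - (b' + 2) + 1 by omega]
            exact Or.inl (snoc_hyper_same _ (hf1adj (i - (b' + 2)) (by omega)))

end FoldedAux
section EnhAux

lemma enhanced_self_adj {k : ℕ} (hk : 1 ≤ k) {u v : Fin k → Bool} :
    (enhanced k k).Adj u v ↔ (folded k).Adj u v := by
  constructor
  · rintro (h | ⟨hne, hb⟩)
    · exact Or.inl h
    · exact Or.inr ⟨hne, fun i => (hb i).1 i.isLt⟩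
  · rintro (h | ⟨hne, hd⟩)
    · exact Or.inl h
    · exact Or.inr ⟨hne, fun i => ⟨fun _ => hd i, fun hk' => absurd i.isLt (by omega)⟩⟩

lemma enhanced_hdeg {n k : ℕ} (hn : 1 ≤ n) : Hdeg (enhanced n k) := by
  intro v
  exact ⟨_, Or.inl (flip_adj v ⟨0, by omega⟩)⟩

lemma enh_hcyc : ∀ (d k : ℕ), 1 ≤ k → Hcyc (enhanced (k + d) k) (2 ^ (k + d)) := by
  intro d
  induction d with
  | zero =>
    intro k hk x y hadj l hl2 hl4 hlN
    exact cycOn_mono (fun a b h => (enhanced_self_adj hk).2 h)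
      (folded_hcyc k hk x y ((enhanced_self_adj hk).1 hadj) l hl2 hl4 hlN)
  | succ d ih =>
    intro k hk
    have hkd : 1 ≤ k + d := by omega
    have hN2 : 2 ≤ 2 ^ (k + d) := by
      calc 2 = 2 ^ 1 := by norm_num
      _ ≤ 2 ^ (k + d) := Nat.pow_le_pow_right (by norm_num) hkd
    have hNe : 2 ^ (k + d) % 2 = 0 := by
      obtain ⟨m', he⟩ : ∃ m', k + d = m' + 1 := ⟨k + d - 1, by omega⟩
      rw [he, pow_succ]
      omega
    have hstep := prod_hcyc (enhanced_hdeg hkd) (ih k hk) hN2 hNe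
    rw [show 2 * 2 ^ (k + d) = 2 ^ (k + (d + 1)) by ring] at hstep
    exact hcyc_equiv (splitEquiv (k + d))
      (enhanced_split hk (Nat.le_add_right k d)) hstep

end EnhAux
/-- Every edge of `Q_{n,k}` (`1 ≤ k ≤ n`, `n ≥ 3`) lies on a cycle of every even
length `l` with `4 ≤ l ≤ 2^n`. -/
theorem stmt13 (n k : ℕ) (h1 : 1 ≤ k) (h2 : k ≤ n) (hn : 3 ≤ n) :
    ∀ e ∈ (enhanced n k).edgeSet, ∀ l : ℕ, Even l → 4 ≤ l → l ≤ 2 ^ n →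
      EdgeOnCycle (enhanced n k) e l := by
  obtain ⟨d, rfl⟩ : ∃ d, n = k + d := ⟨n - k, by omega⟩
  intro e he
  revert he
  refine Sym2.ind (fun x y => ?_) e
  intro he l hev hl4 hlN
  exact edgeOnCycle_of_cycOn (by omega)
    (enh_hcyc d k h1 x y ((SimpleGraph.mem_edgeSet _).1 he) l (Nat.even_iff.1 hev) hl4 hlN)
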